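/- Define p : ℝ × (0,∞) → ℝ by p(x,t) = (2/π) ∫₀^∞ (s/(s²+x²)) · (exp(−s²/(2t))/√(2πt)) ds. Then for every x ≠ 0 and t > 0, p satisfies the non-homogeneous backward heat equation ∂p/∂t = −(1/2) ∂²p/∂x² + 1/(π x² √(2π t)). -/

import Mathlib

open Real MeasureTheory

/-- Density of the process `C(|B(t)|)`: a standard Cauchy process composed with the
absolute value of an independent standard Brownian motion. -/
noncomputable def cauchyBMDensity (x t : ℝ) : ℝ :=
  (2 / π) * ∫ s in Set.Ioi (0 : ℝ),
    (s / (s ^ 2 + x ^ 2)) * (Real.exp (-s ^ 2 / (2 * t)) / Real.sqrt (2 * π * t))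

open Set Filter Topology

noncomputable def gK (t s : ℝ) : ℝ := Real.exp (-s ^ 2 / (2 * t)) / Real.sqrt (2 * π * t)
noncomputable def gKt (t s : ℝ) : ℝ := (s ^ 2 / (2 * t ^ 2) - 1 / (2 * t)) * gK t s
noncomputable def fK (x s : ℝ) : ℝ := s / (s ^ 2 + x ^ 2)
noncomputable def fK1 (x s : ℝ) : ℝ := -2 * x * s / (s ^ 2 + x ^ 2) ^ 2
noncomputable def fK2 (x s : ℝ) : ℝ := (6 * x ^ 2 * s - 2 * s ^ 3) / (s ^ 2 + x ^ 2) ^ 3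

lemma integrable_pow_gauss (n : ℕ) {b : ℝ} (hb : 0 < b) :
    Integrable (fun s : ℝ => s ^ n * Real.exp (-b * s ^ 2)) := by
  have h := integrable_rpow_mul_exp_neg_mul_sq hb (s := (n:ℝ)) (lt_of_lt_of_le neg_one_lt_zero (Nat.cast_nonneg n))
  simpa [Real.rpow_natCast] using h

lemma gK_nonneg (t s : ℝ) : 0 ≤ gK t s := by
  unfold gK; positivity

lemma integrable_gK {t : ℝ} (ht : 0 < t) :
    IntegrableOn (fun s => gK t s) (Ioi (0:ℝ)) := by
  have h := (integrable_pow_gauss 0 (b := 1/(2*t)) (by positivity)).div_const (Real.sqrt (2*π*t))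
  have : (fun s : ℝ => s ^ 0 * Real.exp (-(1/(2*t)) * s ^ 2) / Real.sqrt (2*π*t))
      = fun s => gK t s := by
    funext s; unfold gK; rw [show -s^2/(2*t) = -(1/(2*t)) * s^2 by ring]; ring
  rw [this] at h
  exact h.integrableOn

lemma continuous_gK {t : ℝ} (ht : 0 < t) : Continuous (fun s => gK t s) := by
  unfold gK
  exact (Real.continuous_exp.comp (by continuity)).div_const _

lemma gK_tendsto_zero {t : ℝ} (ht : 0 < t) :
    Tendsto (fun s => gK t s) atTop (𝓝 0) := by
  unfold gK
  rw [show (0:ℝ) = 0 / Real.sqrt (2*π*t) by simp]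
  apply Tendsto.div_const
  apply Real.tendsto_exp_atBot.comp
  have h1 : Tendsto (fun s : ℝ => s ^ 2 / (2*t)) atTop atTop :=
    (tendsto_pow_atTop two_ne_zero).atTop_div_const (by positivity)
  have h2 : Tendsto (fun s : ℝ => -(s ^ 2 / (2*t))) atTop atBot := tendsto_neg_atBot_iff.mpr h1
  simpa [neg_div] using h2

-- s-derivative of the heat kernel
lemma hasDerivAt_gK_s {t : ℝ} (ht : 0 < t) (s : ℝ) :
    HasDerivAt (fun u => gK t u) (-s / t * gK t s) s := by
  have hinner : HasDerivAt (fun u : ℝ => -u ^ 2 / (2 * t)) (-s / t) s := by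
    have h := ((hasDerivAt_pow 2 s).const_mul (-(1/(2*t))))
    have : (fun u : ℝ => -(1/(2*t)) * u ^ 2) = fun u : ℝ => -u ^ 2 / (2 * t) := by
      funext u; ring
    rw [this] at h
    refine h.congr_deriv ?_
    field_simp; ring
  have h := (hinner.exp).div_const (Real.sqrt (2 * π * t))
  refine h.congr_deriv ?_
  unfold gK; ring

-- t-derivative of the heat kernel
lemma hasDerivAt_gK_t (s : ℝ) {τ : ℝ} (hτ : 0 < τ) :
    HasDerivAt (fun u => gK u s) (gKt τ s) τ := by
  have hsqrtpos : 0 < Real.sqrt (2 * π * τ) := Real.sqrt_pos.mpr (by positivity)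
  have hexp : HasDerivAt (fun u : ℝ => Real.exp (-s ^ 2 / (2 * u)))
      (Real.exp (-s ^ 2 / (2 * τ)) * (s ^ 2 / (2 * τ ^ 2))) τ := by
    have hin : HasDerivAt (fun u : ℝ => -s ^ 2 / (2 * u)) (s ^ 2 / (2 * τ ^ 2)) τ := by
      have h := (hasDerivAt_inv hτ.ne').const_mul (-s ^ 2 / 2)
      have : (fun u : ℝ => -s ^ 2 / 2 * u⁻¹) = fun u : ℝ => -s ^ 2 / (2 * u) := by
        funext u; field_simp
      rw [this] at h
      refine h.congr_deriv ?_
      field_simp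
    exact hin.exp
  have hsqrt : HasDerivAt (fun u : ℝ => Real.sqrt (2 * π * u)) (π / Real.sqrt (2 * π * τ)) τ := by
    have hlin : HasDerivAt (fun u : ℝ => 2 * π * u) (2 * π) τ := by
      simpa using (hasDerivAt_id τ).const_mul (2 * π)
    have h := (Real.hasDerivAt_sqrt (by positivity : (2*π*τ) ≠ 0)).comp τ hlin
    refine h.congr_deriv ?_
    field_simp
  have h := hexp.div hsqrt hsqrtpos.ne'
  refine h.congr_deriv ?_
  unfold gKt gK
  have hS2 : Real.sqrt (2 * π * τ) ^ 2 = 2 * π * τ := Real.sq_sqrt (by positivity)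
  set S := Real.sqrt (2 * π * τ) with hS
  have hπ' : π = S ^ 2 / (2 * τ) := by rw [hS2]; field_simp
  rw [hπ']
  field_simp

-- x-derivative of fK
lemma hasDerivAt_fK {s y : ℝ} (hy : y ≠ 0) :
    HasDerivAt (fun z => fK z s) (fK1 y s) y := by
  have hd : (s ^ 2 + y ^ 2) ≠ 0 := by positivity
  have hden : HasDerivAt (fun z : ℝ => s ^ 2 + z ^ 2) (2 * y) y := by
    simpa using (hasDerivAt_pow 2 y).const_add (s ^ 2)
  have h := (hasDerivAt_const y s).div hden hd
  refine h.congr_deriv ?_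
  unfold fK1
  field_simp; ring

-- x-derivative of fK1
lemma hasDerivAt_fK1 {s y : ℝ} (hy : y ≠ 0) :
    HasDerivAt (fun z => fK1 z s) (fK2 y s) y := by
  have hd : (s ^ 2 + y ^ 2) ≠ 0 := by positivity
  have hnum : HasDerivAt (fun z : ℝ => -2 * z * s) (-2 * s) y := by
    simpa using (((hasDerivAt_id y).const_mul (-2:ℝ)).mul_const s)
  have hden : HasDerivAt (fun z : ℝ => (s ^ 2 + z ^ 2) ^ 2) (2 * (s ^ 2 + y ^ 2) * (2 * y)) y := by
    have hb : HasDerivAt (fun z : ℝ => s ^ 2 + z ^ 2) (2 * y) y := by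
      simpa using (hasDerivAt_pow 2 y).const_add (s ^ 2)
    have := hb.pow 2
    refine this.congr_deriv ?_
    ring
  have h := hnum.div hden (by positivity)
  refine h.congr_deriv ?_
  unfold fK2
  field_simp
  ring
lemma abs_fK_le {x : ℝ} (hx : x ≠ 0) (s : ℝ) : |fK x s| ≤ 1 / (2 * |x|) := by
  have hd : (0:ℝ) < s ^ 2 + x ^ 2 := by positivity
  unfold fK
  rw [abs_div, abs_of_pos hd, div_le_div_iff₀ hd (by positivity)]
  nlinarith [sq_nonneg (|s| - |x|), sq_abs s, sq_abs x, abs_nonneg s, abs_nonneg x]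

lemma abs_fK1_le {z : ℝ} (hz : z ≠ 0) (s : ℝ) : |fK1 z s| ≤ 1 / z ^ 2 := by
  have hd : (0:ℝ) < s ^ 2 + z ^ 2 := by positivity
  unfold fK1
  rw [abs_div, abs_of_pos (by positivity : (0:ℝ) < (s^2+z^2)^2),
    div_le_div_iff₀ (by positivity) (by positivity)]
  have h1 : |(-2) * z * s| = 2 * (|z| * |s|) := by
    rw [abs_mul, abs_mul]; norm_num; ring
  have a1 : 2 * (|z| * |s|) ≤ s ^ 2 + z ^ 2 := by
    nlinarith [sq_nonneg (|s| - |z|), sq_abs s, sq_abs z]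
  calc |(-2) * z * s| * z ^ 2 = 2 * (|z| * |s|) * z ^ 2 := by rw [h1]
    _ ≤ (s ^ 2 + z ^ 2) * (s ^ 2 + z ^ 2) :=
        mul_le_mul a1 (by nlinarith [sq_nonneg s]) (sq_nonneg z) (by positivity)
    _ = 1 * (s ^ 2 + z ^ 2) ^ 2 := by ring

lemma abs_fK2_le {z : ℝ} (hz : z ≠ 0) (s : ℝ) : |fK2 z s| ≤ 3 / (|z| * z ^ 2) := by
  have hd : (0:ℝ) < s ^ 2 + z ^ 2 := by positivity
  have hz0 : (0:ℝ) < |z| := abs_pos.mpr hz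
  unfold fK2
  rw [abs_div, abs_of_pos (by positivity : (0:ℝ) < (s^2+z^2)^3),
    div_le_div_iff₀ (by positivity) (by positivity)]
  have h1 : |6 * z ^ 2 * s - 2 * s ^ 3| ≤ 6 * |s| * (s ^ 2 + z ^ 2) := by
    have e : 6 * z ^ 2 * s - 2 * s ^ 3 = (2 * s) * (3 * z ^ 2 - s ^ 2) := by ring
    rw [e, abs_mul]
    have h2 : |3 * z ^ 2 - s ^ 2| ≤ 3 * z ^ 2 + s ^ 2 :=
      abs_le.mpr ⟨by nlinarith [sq_nonneg s, sq_nonneg z], by nlinarith [sq_nonneg s, sq_nonneg z]⟩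
    calc |2 * s| * |3 * z ^ 2 - s ^ 2| ≤ |2 * s| * (3 * z ^ 2 + s ^ 2) :=
          mul_le_mul_of_nonneg_left h2 (abs_nonneg _)
      _ = 2 * |s| * (3 * z ^ 2 + s ^ 2) := by rw [abs_mul]; norm_num
      _ ≤ 6 * |s| * (s ^ 2 + z ^ 2) := by nlinarith [abs_nonneg s, sq_nonneg s, sq_nonneg z]
  have a1 : 2 * (|s| * |z|) ≤ s ^ 2 + z ^ 2 := by
    nlinarith [sq_nonneg (|s| - |z|), sq_abs s, sq_abs z]
  calc |6 * z ^ 2 * s - 2 * s ^ 3| * (|z| * z ^ 2)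
      ≤ (6 * |s| * (s ^ 2 + z ^ 2)) * (|z| * z ^ 2) :=
        mul_le_mul_of_nonneg_right h1 (by positivity)
    _ = 3 * ((2 * (|s| * |z|)) * z ^ 2) * (s ^ 2 + z ^ 2) := by ring
    _ ≤ 3 * ((s ^ 2 + z ^ 2) * (s ^ 2 + z ^ 2)) * (s ^ 2 + z ^ 2) := by
        apply mul_le_mul_of_nonneg_right _ hd.le
        apply mul_le_mul_of_nonneg_left _ (by norm_num)
        exact mul_le_mul a1 (by nlinarith [sq_nonneg s]) (sq_nonneg z) hd.le
    _ = 3 * (s ^ 2 + z ^ 2) ^ 3 := by ring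

lemma continuous_gK2 (t : ℝ) : Continuous fun s => gK t s := by
  unfold gK; exact (Real.continuous_exp.comp (by continuity)).div_const _

lemma continuous_gKt2 (t : ℝ) : Continuous fun s => gKt t s := by
  unfold gKt; exact Continuous.mul (by continuity) (continuous_gK2 t)

lemma continuous_fKc {x : ℝ} (hx : x ≠ 0) : Continuous fun s => fK x s := by
  unfold fK; exact continuous_id.div (by continuity) fun s => by positivity

lemma continuous_fK1c {x : ℝ} (hx : x ≠ 0) : Continuous fun s => fK1 x s := by
  unfold fK1; exact Continuous.div (by continuity) (by continuity) fun s => by positivity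

lemma continuous_fK2c {x : ℝ} (hx : x ≠ 0) : Continuous fun s => fK2 x s := by
  unfold fK2; exact Continuous.div (by continuity) (by continuity) fun s => by positivity

lemma integrable_fK_gK {x t : ℝ} (hx : x ≠ 0) (ht : 0 < t) :
    IntegrableOn (fun s => fK x s * gK t s) (Ioi (0:ℝ)) := by
  apply Integrable.mono' ((integrable_gK ht).const_mul (1 / (2 * |x|)))
  · exact ((continuous_fKc hx).mul (continuous_gK2 t)).aestronglyMeasurable
  · refine Eventually.of_forall fun s => ?_
    rw [Real.norm_eq_abs, abs_mul, abs_of_nonneg (gK_nonneg t s)]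
    exact mul_le_mul_of_nonneg_right (abs_fK_le hx s) (gK_nonneg t s)

lemma integrable_fK1_gK {x t : ℝ} (hx : x ≠ 0) (ht : 0 < t) :
    IntegrableOn (fun s => fK1 x s * gK t s) (Ioi (0:ℝ)) := by
  apply Integrable.mono' ((integrable_gK ht).const_mul (1 / x ^ 2))
  · exact ((continuous_fK1c hx).mul (continuous_gK2 t)).aestronglyMeasurable
  · refine Eventually.of_forall fun s => ?_
    rw [Real.norm_eq_abs, abs_mul, abs_of_nonneg (gK_nonneg t s)]
    exact mul_le_mul_of_nonneg_right (abs_fK1_le hx s) (gK_nonneg t s)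

lemma lemA {x t : ℝ} (hx : x ≠ 0) (ht : 0 < t) :
    IntegrableOn (fun s => fK x s * gKt t s) (Ioi (0:ℝ)) ∧
      HasDerivAt (fun τ => ∫ s in Ioi (0:ℝ), fK x s * gK τ s)
        (∫ s in Ioi (0:ℝ), fK x s * gKt t s) t := by
  have hx' : (0:ℝ) < |x| := abs_pos.mpr hx
  have hsq : (0:ℝ) < Real.sqrt (π * t) := Real.sqrt_pos.mpr (by positivity)
  have h := hasDerivAt_integral_of_dominated_loc_of_deriv_le
    (μ := volume.restrict (Ioi (0:ℝ)))
    (F := fun τ s => fK x s * gK τ s) (F' := fun τ s => fK x s * gKt τ s) (x₀ := t)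
    (bound := fun s => 1 / (2 * |x|) *
      ((2 * s ^ 2 / t ^ 2 + 1 / t) * (Real.exp (-(1 / (3 * t)) * s ^ 2) / Real.sqrt (π * t))))
    (s := Metric.ball t (t / 2)) (Metric.ball_mem_nhds _ (by positivity))
    (Eventually.of_forall fun τ =>
      ((continuous_fKc hx).mul (continuous_gK2 τ)).aestronglyMeasurable.restrict)
    (integrable_fK_gK hx ht)
    ((continuous_fKc hx).mul (continuous_gKt2 t)).aestronglyMeasurable.restrict
    ?_ ?_ ?_
  · exact h
  · -- bound
    refine Eventually.of_forall fun s => fun τ hτ => ?_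
    rw [Metric.mem_ball, Real.dist_eq, abs_lt] at hτ
    have hτ1 : t / 2 < τ := by linarith [hτ.1]
    have hτ2 : τ < 3 * t / 2 := by linarith [hτ.2]
    have hτ0 : 0 < τ := by linarith
    have e2 : gK τ s ≤ Real.exp (-(1 / (3 * t)) * s ^ 2) / Real.sqrt (π * t) := by
      unfold gK
      apply div_le_div₀ (Real.exp_pos _).le _ hsq (Real.sqrt_le_sqrt (by nlinarith [Real.pi_pos]))
      apply Real.exp_le_exp.mpr
      rw [neg_div, neg_mul, neg_le_neg_iff, show (1:ℝ) / (3 * t) * s ^ 2 = s ^ 2 / (3 * t) by ring,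
        div_le_div_iff₀ (by positivity) (by positivity)]
      nlinarith [sq_nonneg s]
    have hcoef : |s ^ 2 / (2 * τ ^ 2) - 1 / (2 * τ)| ≤ 2 * s ^ 2 / t ^ 2 + 1 / t := by
      have k1 : s ^ 2 / (2 * τ ^ 2) ≤ 2 * s ^ 2 / t ^ 2 := by
        rw [div_le_div_iff₀ (by positivity) (by positivity)]
        nlinarith [mul_nonneg (sq_nonneg s) (show (0:ℝ) ≤ 4 * τ ^ 2 - t ^ 2 by nlinarith)]
      have k2 : 1 / (2 * τ) ≤ 1 / t := by
        apply one_div_le_one_div_of_le ht; linarith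
      have k3 : (0:ℝ) ≤ s ^ 2 / (2 * τ ^ 2) := by positivity
      have k4 : (0:ℝ) ≤ 2 * s ^ 2 / t ^ 2 := by positivity
      have k5 : (0:ℝ) < 1 / (2 * τ) := by positivity
      exact abs_le.mpr ⟨by linarith, by linarith⟩
    have e3 : |gKt τ s| ≤ (2 * s ^ 2 / t ^ 2 + 1 / t) *
        (Real.exp (-(1 / (3 * t)) * s ^ 2) / Real.sqrt (π * t)) := by
      unfold gKt
      rw [abs_mul, abs_of_nonneg (gK_nonneg τ s)]
      exact mul_le_mul hcoef e2 (gK_nonneg τ s) (by positivity)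
    rw [Real.norm_eq_abs, abs_mul]
    exact mul_le_mul (abs_fK_le hx s) e3 (abs_nonneg _) (by positivity)
  · -- bound integrable
    have hb : (0:ℝ) < 1 / (3 * t) := by positivity
    have h2 := (integrable_pow_gauss 2 hb).const_mul (1 / (|x| * t ^ 2 * Real.sqrt (π * t)))
    have h0 := (integrable_pow_gauss 0 hb).const_mul (1 / (2 * |x| * t * Real.sqrt (π * t)))
    have hsum := h2.add h0
    have heq : (fun s : ℝ => 1 / (2 * |x|) *
        ((2 * s ^ 2 / t ^ 2 + 1 / t) * (Real.exp (-(1 / (3 * t)) * s ^ 2) / Real.sqrt (π * t))))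
        = fun s : ℝ => 1 / (|x| * t ^ 2 * Real.sqrt (π * t)) *
            (s ^ 2 * Real.exp (-(1 / (3 * t)) * s ^ 2))
          + 1 / (2 * |x| * t * Real.sqrt (π * t)) *
            (s ^ 0 * Real.exp (-(1 / (3 * t)) * s ^ 2)) := by
      funext s
      have : Real.sqrt (π * t) ≠ 0 := hsq.ne'
      field_simp
    rw [heq]
    exact hsum.integrableOn
  · -- differentiability
    refine Eventually.of_forall fun s => fun τ hτ => ?_
    rw [Metric.mem_ball, Real.dist_eq, abs_lt] at hτ
    have hτ0 : 0 < τ := by linarith [hτ.1]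
    exact (hasDerivAt_gK_t s hτ0).const_mul (fK x s)

lemma ball_facts {y z : ℝ} (hy : y ≠ 0) (hz : z ∈ Metric.ball y (|y| / 2)) :
    |y| / 2 ≤ |z| ∧ z ≠ 0 := by
  have hy' : (0:ℝ) < |y| := abs_pos.mpr hy
  rw [Metric.mem_ball, Real.dist_eq] at hz
  have h1 : |y| - |z| ≤ |z - y| := by
    rw [abs_sub_comm]; exact abs_sub_abs_le_abs_sub y z
  have h2 : |y| / 2 ≤ |z| := by linarith
  exact ⟨h2, abs_pos.mp (by linarith)⟩

lemma lemB1 {y t : ℝ} (hy : y ≠ 0) (ht : 0 < t) :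
    IntegrableOn (fun s => fK1 y s * gK t s) (Ioi (0:ℝ)) ∧
      HasDerivAt (fun z => ∫ s in Ioi (0:ℝ), fK z s * gK t s)
        (∫ s in Ioi (0:ℝ), fK1 y s * gK t s) y := by
  have hy' : (0:ℝ) < |y| := abs_pos.mpr hy
  exact hasDerivAt_integral_of_dominated_loc_of_deriv_le
    (μ := volume.restrict (Ioi (0:ℝ)))
    (F := fun z s => fK z s * gK t s) (F' := fun z s => fK1 z s * gK t s) (x₀ := y)
    (bound := fun s => 4 / y ^ 2 * gK t s)
    (s := Metric.ball y (|y| / 2)) (Metric.ball_mem_nhds _ (by positivity))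
    (Eventually.of_forall fun z =>
      (Measurable.aestronglyMeasurable (by unfold fK; fun_prop)).mul
        (continuous_gK2 t).aestronglyMeasurable.restrict)
    (integrable_fK_gK hy ht)
    ((continuous_fK1c hy).mul (continuous_gK2 t)).aestronglyMeasurable.restrict
    (Eventually.of_forall fun s => fun z hz => by
      obtain ⟨h2, hz0⟩ := ball_facts hy hz
      rw [Real.norm_eq_abs, abs_mul, abs_of_nonneg (gK_nonneg t s)]
      apply mul_le_mul_of_nonneg_right _ (gK_nonneg t s)
      refine (abs_fK1_le hz0 s).trans ?_
      rw [div_le_div_iff₀ (by positivity) (by positivity)]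
      have h3 : (|y| / 2) ^ 2 ≤ |z| ^ 2 := pow_le_pow_left₀ (by positivity) h2 2
      nlinarith [sq_abs y, sq_abs z])
    (((integrable_gK ht).const_mul _))
    (Eventually.of_forall fun s => fun z hz =>
      ((hasDerivAt_fK (ball_facts hy hz).2).mul_const (gK t s)))

lemma lemB2 {y t : ℝ} (hy : y ≠ 0) (ht : 0 < t) :
    IntegrableOn (fun s => fK2 y s * gK t s) (Ioi (0:ℝ)) ∧
      HasDerivAt (fun z => ∫ s in Ioi (0:ℝ), fK1 z s * gK t s)
        (∫ s in Ioi (0:ℝ), fK2 y s * gK t s) y := by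
  have hy' : (0:ℝ) < |y| := abs_pos.mpr hy
  exact hasDerivAt_integral_of_dominated_loc_of_deriv_le
    (μ := volume.restrict (Ioi (0:ℝ)))
    (F := fun z s => fK1 z s * gK t s) (F' := fun z s => fK2 z s * gK t s) (x₀ := y)
    (bound := fun s => 24 / (|y| * y ^ 2) * gK t s)
    (s := Metric.ball y (|y| / 2)) (Metric.ball_mem_nhds _ (by positivity))
    (Eventually.of_forall fun z =>
      (Measurable.aestronglyMeasurable (by unfold fK1; fun_prop)).mul
        (continuous_gK2 t).aestronglyMeasurable.restrict)
    (integrable_fK1_gK hy ht)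
    ((continuous_fK2c hy).mul (continuous_gK2 t)).aestronglyMeasurable.restrict
    (Eventually.of_forall fun s => fun z hz => by
      obtain ⟨h2, hz0⟩ := ball_facts hy hz
      rw [Real.norm_eq_abs, abs_mul, abs_of_nonneg (gK_nonneg t s)]
      apply mul_le_mul_of_nonneg_right _ (gK_nonneg t s)
      refine (abs_fK2_le hz0 s).trans ?_
      rw [div_le_div_iff₀ (by positivity) (by positivity)]
      have h3 : (|y| / 2) ^ 3 ≤ |z| ^ 3 := pow_le_pow_left₀ (by positivity) h2 3
      have e1 : |y| * y ^ 2 = |y| ^ 3 := by rw [← sq_abs]; ring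
      have e2 : |z| * z ^ 2 = |z| ^ 3 := by rw [← sq_abs]; ring
      rw [e1, e2]
      nlinarith)
    (((integrable_gK ht).const_mul _))
    (Eventually.of_forall fun s => fun z hz =>
      ((hasDerivAt_fK1 (ball_facts hy hz).2).mul_const (gK t s)))

lemma lemC {x t : ℝ} (hx : x ≠ 0) (ht : 0 < t)
    (hint : IntegrableOn (fun s => 2 * (fK x s * gKt t s) + fK2 x s * gK t s) (Ioi (0:ℝ))) :
    ∫ s in Ioi (0:ℝ), (2 * (fK x s * gKt t s) + fK2 x s * gK t s)
      = 1 / (x ^ 2 * Real.sqrt (2 * π * t)) := by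
  set W : ℝ → ℝ := fun s =>
    fK x s * (-s / t * gK t s) - (x ^ 2 - s ^ 2) / (s ^ 2 + x ^ 2) ^ 2 * gK t s with hW
  have hWderiv : ∀ s : ℝ, HasDerivAt W (2 * (fK x s * gKt t s) + fK2 x s * gK t s) s := by
    intro s
    have hd : (s ^ 2 + x ^ 2) ≠ 0 := by positivity
    have hg := hasDerivAt_gK_s ht s
    have hgs : HasDerivAt (fun u => -u / t * gK t u)
        (-1 / t * gK t s + -s / t * (-s / t * gK t s)) s := by
      have hlin : HasDerivAt (fun u : ℝ => -u / t) (-1 / t) s := by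
        simpa [neg_div] using ((hasDerivAt_id s).neg.div_const t)
      exact hlin.mul hg
    have hf : HasDerivAt (fun u => fK x u) ((x ^ 2 - s ^ 2) / (s ^ 2 + x ^ 2) ^ 2) s := by
      have hden : HasDerivAt (fun u : ℝ => u ^ 2 + x ^ 2) (2 * s) s := by
        simpa using (hasDerivAt_pow 2 s).add_const (x ^ 2)
      have h := (hasDerivAt_id s).div hden hd
      refine h.congr_deriv ?_
      field_simp; simp only [id_eq]; ring
    have hfp : HasDerivAt (fun u : ℝ => (x ^ 2 - u ^ 2) / (u ^ 2 + x ^ 2) ^ 2)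
        ((2 * s ^ 3 - 6 * x ^ 2 * s) / (s ^ 2 + x ^ 2) ^ 3) s := by
      have hnum : HasDerivAt (fun u : ℝ => x ^ 2 - u ^ 2) (-(2 * s)) s := by
        simpa using ((hasDerivAt_pow 2 s)).const_sub (x ^ 2)
      have hden : HasDerivAt (fun u : ℝ => (u ^ 2 + x ^ 2) ^ 2)
          (2 * (s ^ 2 + x ^ 2) * (2 * s)) s := by
        have hb : HasDerivAt (fun u : ℝ => u ^ 2 + x ^ 2) (2 * s) s := by
          simpa using (hasDerivAt_pow 2 s).add_const (x ^ 2)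
        have := hb.pow 2
        refine this.congr_deriv ?_
        ring
      have h := hnum.div hden (by positivity)
      refine h.congr_deriv ?_
      field_simp; ring
    have h := (hf.mul hgs).sub (hfp.mul hg)
    refine h.congr_deriv ?_
    unfold fK fK2 gKt
    field_simp
    ring
  have hcont : ContinuousWithinAt W (Ici 0) 0 := by
    apply Continuous.continuousWithinAt
    apply Continuous.sub
    · exact (continuous_fKc hx).mul ((continuous_id.neg.div_const t).mul (continuous_gK2 t))
    · exact (Continuous.div (by continuity) (by continuity) fun s => by positivity).mul
        (continuous_gK2 t)
  have htendW : Tendsto W atTop (𝓝 0) := by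
    have hb : ∀ s, ‖W s‖ ≤ (1 / t + 1 / x ^ 2) * gK t s := by
      intro s
      have hd : (0:ℝ) < s ^ 2 + x ^ 2 := by positivity
      have hg0 := gK_nonneg t s
      have hc : W s = (fK x s * (-s / t) - (x ^ 2 - s ^ 2) / (s ^ 2 + x ^ 2) ^ 2) * gK t s := by
        rw [hW]; ring
      rw [hc, Real.norm_eq_abs, abs_mul, abs_of_nonneg hg0]
      apply mul_le_mul_of_nonneg_right _ hg0
      have b1 : |fK x s * (-s / t)| ≤ 1 / t := by
        have e : fK x s * (-s / t) = -(s ^ 2) / ((s ^ 2 + x ^ 2) * t) := by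
          unfold fK; field_simp
        rw [e, abs_div, abs_of_pos (by positivity : (0:ℝ) < (s ^ 2 + x ^ 2) * t), abs_neg,
          abs_of_nonneg (sq_nonneg s), div_le_div_iff₀ (by positivity) (by positivity)]
        nlinarith [sq_nonneg x, sq_nonneg s]
      have b2 : |(x ^ 2 - s ^ 2) / (s ^ 2 + x ^ 2) ^ 2| ≤ 1 / x ^ 2 := by
        rw [abs_div, abs_of_pos (by positivity : (0:ℝ) < (s ^ 2 + x ^ 2) ^ 2),
          div_le_div_iff₀ (by positivity) (by positivity)]
        have : |x ^ 2 - s ^ 2| ≤ x ^ 2 + s ^ 2 :=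
          abs_le.mpr ⟨by nlinarith [sq_nonneg s, sq_nonneg x], by nlinarith [sq_nonneg s]⟩
        nlinarith [sq_nonneg (x ^ 2 - s ^ 2), sq_nonneg x, sq_nonneg s,
          mul_le_mul_of_nonneg_right this (sq_nonneg x)]
      calc |fK x s * (-s / t) - (x ^ 2 - s ^ 2) / (s ^ 2 + x ^ 2) ^ 2|
          ≤ |fK x s * (-s / t)| + |(x ^ 2 - s ^ 2) / (s ^ 2 + x ^ 2) ^ 2| := abs_sub _ _
        _ ≤ 1 / t + 1 / x ^ 2 := add_le_add b1 b2
    exact squeeze_zero_norm hb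
      (by have h := (gK_tendsto_zero ht).const_mul (1 / t + 1 / x ^ 2)
          rwa [mul_zero] at h)
  have hftc := integral_Ioi_of_hasDerivAt_of_tendsto hcont (fun s _ => hWderiv s) hint htendW
  rw [hftc, hW]
  have hsq : (0:ℝ) < Real.sqrt (2 * π * t) := Real.sqrt_pos.mpr (by positivity)
  unfold fK gK
  norm_num
  field_simp

/-- For `x ≠ 0`, `t > 0`, the density of `C(|B(t)|)` satisfies the non-homogeneous
backward heat equation `∂p/∂t = −(1/2)∂²p/∂x² + 1/(π x² √(2π t))`. -/
theorem cauchyBMDensity_backward_heat :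
    ∀ x t : ℝ, x ≠ 0 → 0 < t →
      deriv (fun τ => cauchyBMDensity x τ) t
        = -(1 / 2) * iteratedDeriv 2 (fun y => cauchyBMDensity y t) x
          + 1 / (π * x ^ 2 * Real.sqrt (2 * π * t)) := by
  intro x t hx ht
  have hA := lemA hx ht
  have hB2 := lemB2 hx ht
  have hderiv_t : deriv (fun τ => cauchyBMDensity x τ) t
      = 2 / π * ∫ s in Ioi (0:ℝ), fK x s * gKt t s := by
    rw [show (fun τ => cauchyBMDensity x τ)
        = fun τ => 2 / π * ∫ s in Ioi (0:ℝ), fK x s * gK τ s from rfl]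
    exact (hA.2.const_mul (2 / π)).deriv
  have hfirst : ∀ y : ℝ, y ≠ 0 → deriv (fun z => cauchyBMDensity z t) y
      = 2 / π * ∫ s in Ioi (0:ℝ), fK1 y s * gK t s := by
    intro y hy
    rw [show (fun z => cauchyBMDensity z t)
        = fun z => 2 / π * ∫ s in Ioi (0:ℝ), fK z s * gK t s from rfl]
    exact ((lemB1 hy ht).2.const_mul (2 / π)).deriv
  have hsecond : deriv (deriv (fun z => cauchyBMDensity z t)) x
      = 2 / π * ∫ s in Ioi (0:ℝ), fK2 x s * gK t s := by
    have hev : deriv (fun z => cauchyBMDensity z t)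
        =ᶠ[𝓝 x] fun y => 2 / π * ∫ s in Ioi (0:ℝ), fK1 y s * gK t s := by
      filter_upwards [isOpen_compl_singleton.mem_nhds
        (by simpa using hx : x ∈ ({0}ᶜ : Set ℝ))] with y hy
      exact hfirst y hy
    rw [hev.deriv_eq]
    exact (hB2.2.const_mul (2 / π)).deriv
  have hiter : iteratedDeriv 2 (fun y => cauchyBMDensity y t) x
      = 2 / π * ∫ s in Ioi (0:ℝ), fK2 x s * gK t s := by
    rw [iteratedDeriv_succ, iteratedDeriv_one]
    exact hsecond
  have hintC : IntegrableOn (fun s => 2 * (fK x s * gKt t s) + fK2 x s * gK t s)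
      (Ioi (0:ℝ)) := (hA.1.const_mul 2).add hB2.1
  have hC := lemC hx ht hintC
  rw [integral_add (hA.1.const_mul 2) hB2.1, integral_const_mul] at hC
  rw [hderiv_t, hiter]
  have hπ := Real.pi_pos
  linear_combination (1 / π) * hC
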